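/- For $n\ge 3$, the second Lie algebra cohomology $H^2(\mathfrak{m}_0(n);\mathbb{K})$ has dimension $\lfloor (n+1)/2 \rfloor$, with a basis given by the classes of the cocycles $e^1\wedge e^n$ and $\frac{1}{2}\sum_{i=2}^{2k-1}(-1)^i e^i\wedge e^{2k+1-i}$ for $k=2,\dots,\lfloor (n+1)/2\rfloor$. -/

import Mathlib

/-- Structure constants of `𝔪₀(n)` with respect to the (zero-based) basis
`e₁, …, eₙ`: `[e₁, eᵢ] = e_{i+1}` for `2 ≤ i ≤ n-1`, all other brackets zero. -/
def m0c (K : Type*) [Field K] (n : ℕ) (i j l : Fin n) : K :=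
  (if i.val = 0 ∧ 1 ≤ j.val ∧ l.val = j.val + 1 then 1 else 0)
  - (if j.val = 0 ∧ 1 ≤ i.val ∧ l.val = i.val + 1 then 1 else 0)

/-- A 2-cochain on `𝔪₀(n)`, given by its matrix `a i j = c(eᵢ, eⱼ)`, is closed
(a Chevalley–Eilenberg 2-cocycle) iff `c([eᵢ,eⱼ],eₗ) + c([eⱼ,eₗ],eᵢ) + c([eₗ,eᵢ],eⱼ) = 0`. -/
def m0Closed (K : Type*) [Field K] (n : ℕ) (a : Fin n → Fin n → K) : Prop :=
  ∀ i j l : Fin n,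
    (∑ m, m0c K n i j m * a m l) + (∑ m, m0c K n j l m * a m i)
      + (∑ m, m0c K n l i m * a m j) = 0

/-- The matrix (in the zero-based basis `e₁, …, eₙ`) of the `⌊(n+1)/2⌋` cocycles:
`e¹ ∧ eⁿ` (for `k = 0`) and
`(1/2) ∑_{i=2}^{2k'-1} (-1)ⁱ eⁱ ∧ e^{2k'+1-i}` for `k' = k+1 = 2, …, ⌊(n+1)/2⌋`. -/
def m0Omega (K : Type*) [Field K] (n : ℕ) (k : Fin ((n + 1) / 2)) (p q : Fin n) : K :=
  if k.val = 0 then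
    (if p.val = 0 ∧ q.val = n - 1 then 1
     else if q.val = 0 ∧ p.val = n - 1 then -1 else 0)
  else
    (if p.val + q.val = 2 * (k.val + 1) - 1 ∧ 1 ≤ p.val ∧ p.val ≤ 2 * (k.val + 1) - 2
      then (-1 : K) ^ (p.val + 1) else 0)

section Aux
variable (K : Type*) [Field K] (n : ℕ)

def ext1 (g : Fin n → K) (t : ℕ) : K := if h : t < n then g ⟨t, h⟩ else 0

def ext2 (a : Fin n → Fin n → K) (p q : ℕ) : K :=
  if h : p < n ∧ q < n then a ⟨p, h.1⟩ ⟨q, h.2⟩ else 0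

lemma ext2_apply (a : Fin n → Fin n → K) (i j : Fin n) :
    ext2 K n a i.val j.val = a i j := by
  unfold ext2; rw [dif_pos ⟨i.isLt, j.isLt⟩]

lemma ext2_zero (a : Fin n → Fin n → K) (p q : ℕ) (h : n ≤ p ∨ n ≤ q) :
    ext2 K n a p q = 0 := by
  unfold ext2; rw [dif_neg]; omega

lemma sum_ite_fin (t : ℕ) (g : Fin n → K) :
    (∑ m : Fin n, if m.val = t then g m else 0) = ext1 K n g t := by
  unfold ext1
  split
  · next h =>
    rw [Finset.sum_eq_single (⟨t, h⟩ : Fin n)]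
    · simp
    · intro b _ hb
      rw [if_neg]
      intro hbt
      exact hb (Fin.ext hbt)
    · simp
  · next h =>
    apply Finset.sum_eq_zero
    intro m _
    rw [if_neg]
    have := m.isLt
    omega

lemma sum_m0c (i j : Fin n) (g : Fin n → K) :
    ∑ m, m0c K n i j m * g m
      = (if i.val = 0 ∧ 1 ≤ j.val then ext1 K n g (j.val + 1) else 0)
        - (if j.val = 0 ∧ 1 ≤ i.val then ext1 K n g (i.val + 1) else 0) := by
  have h1 : ∀ (P : Prop) [Decidable P] (t : ℕ),
      (∑ m : Fin n, (if P ∧ m.val = t then (1 : K) else 0) * g m)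
        = if P then ext1 K n g t else 0 := by
    intro P _ t
    by_cases hP : P
    · simp only [hP, true_and, if_true]
      rw [← sum_ite_fin K n t g]
      apply Finset.sum_congr rfl
      intro m _
      split <;> simp
    · simp [hP]
  simp only [m0c, sub_mul, Finset.sum_sub_distrib]
  simp only [← and_assoc]
  rw [h1, h1]

end Aux

section Aux2
variable (K : Type*) [Field K] (n : ℕ)

lemma ext1_col (a : Fin n → Fin n → K) (l : Fin n) (t : ℕ) :
    ext1 K n (fun m => a m l) t = ext2 K n a t l.val := by
  unfold ext1 ext2
  rcases Nat.lt_or_ge t n with h | h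
  · rw [dif_pos h, dif_pos ⟨h, l.isLt⟩]
  · rw [dif_neg (by omega), dif_neg (by omega)]

lemma closed_iff (a : Fin n → Fin n → K) (hn : 3 ≤ n) :
    m0Closed K n a ↔ ∀ j l : ℕ, 1 ≤ j → j < n → 1 ≤ l → l < n →
      ext2 K n a (j + 1) l = ext2 K n a (l + 1) j := by
  have key : ∀ i j l : Fin n,
      (∑ m, m0c K n i j m * a m l) + (∑ m, m0c K n j l m * a m i)
        + (∑ m, m0c K n l i m * a m j)
      = ((if i.val = 0 ∧ 1 ≤ j.val then ext2 K n a (j.val + 1) l.val else 0)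
          - (if j.val = 0 ∧ 1 ≤ i.val then ext2 K n a (i.val + 1) l.val else 0))
        + ((if j.val = 0 ∧ 1 ≤ l.val then ext2 K n a (l.val + 1) i.val else 0)
          - (if l.val = 0 ∧ 1 ≤ j.val then ext2 K n a (j.val + 1) i.val else 0))
        + ((if l.val = 0 ∧ 1 ≤ i.val then ext2 K n a (i.val + 1) j.val else 0)
          - (if i.val = 0 ∧ 1 ≤ l.val then ext2 K n a (l.val + 1) j.val else 0)) := by
    intro i j l
    rw [sum_m0c, sum_m0c, sum_m0c]
    simp only [ext1_col]
  constructor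
  · intro hc j l hj hjn hl hln
    have h := hc ⟨0, by omega⟩ ⟨j, hjn⟩ ⟨l, hln⟩
    rw [key] at h
    simp only [show (0:ℕ) ≠ 0 ↔ False from by simp] at h
    simp only [true_and, and_true] at h
    rw [if_pos hj, if_neg (by omega), if_neg (by omega), if_neg (by omega),
      if_neg (by omega), if_pos hl] at h
    linear_combination h
  · intro hE i j l
    rw [key]
    rcases Nat.eq_zero_or_pos i.val with hi | hi <;>
      rcases Nat.eq_zero_or_pos j.val with hj | hj <;>
        rcases Nat.eq_zero_or_pos l.val with hl | hl
    · simp [hi, hj, hl]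
    · rw [if_neg (by omega), if_neg (by omega), if_pos ⟨hj, hl⟩, if_neg (by omega),
        if_neg (by omega), if_pos ⟨hi, hl⟩, hi, hj]
      ring
    · rw [if_pos ⟨hi, hj⟩, if_neg (by omega), if_neg (by omega), if_pos ⟨hl, hj⟩,
        if_neg (by omega), if_neg (by omega), hi, hl]
      ring
    · rw [if_pos ⟨hi, hj⟩, if_neg (by omega), if_neg (by omega), if_neg (by omega),
        if_neg (by omega), if_pos ⟨hi, hl⟩,
        hE j.val l.val hj j.isLt hl l.isLt]
      ring
    · rw [if_neg (by omega), if_pos ⟨hj, hi⟩, if_neg (by omega), if_neg (by omega),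
        if_pos ⟨hl, hi⟩, if_neg (by omega), hj, hl]
      ring
    · rw [if_neg (by omega), if_pos ⟨hj, hi⟩, if_pos ⟨hj, hl⟩, if_neg (by omega),
        if_neg (by omega), if_neg (by omega),
        hE i.val l.val hi i.isLt hl l.isLt]
      ring
    · rw [if_neg (by omega), if_neg (by omega), if_neg (by omega), if_pos ⟨hl, hj⟩,
        if_pos ⟨hl, hi⟩, if_neg (by omega),
        hE i.val j.val hi i.isLt hj j.isLt]
      ring
    · rw [if_neg (by omega), if_neg (by omega), if_neg (by omega), if_neg (by omega),
        if_neg (by omega), if_neg (by omega)]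
      ring

end Aux2

section Aux3
variable (K : Type*) [Field K] (n : ℕ)

lemma m0_neg_one_pow_congr (t s : ℕ) (hts : t % 2 = s % 2) : (-1 : K) ^ t = (-1) ^ s := by
  rw [← Nat.div_add_mod t 2, ← Nat.div_add_mod s 2, pow_add, pow_add, pow_mul, pow_mul,
    neg_one_sq, one_pow, one_pow]
  rw [hts]

lemma ext2_omega_zero (hn : 3 ≤ n) (k : Fin ((n + 1) / 2)) (hk : k.val = 0) (p q : ℕ) :
    ext2 K n (m0Omega K n k) p q
      = if p = 0 ∧ q = n - 1 then 1
        else if q = 0 ∧ p = n - 1 then -1 else (0 : K) := by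
  unfold ext2 m0Omega
  split
  · next h =>
    simp [hk]
  · next h =>
    rw [if_neg (by omega), if_neg (by omega)]

lemma ext2_omega_pos (hn : 3 ≤ n) (k : Fin ((n + 1) / 2)) (hk : 1 ≤ k.val) (p q : ℕ) :
    ext2 K n (m0Omega K n k) p q
      = if p + q = 2 * k.val + 1 ∧ 1 ≤ p ∧ p ≤ 2 * k.val then (-1 : K) ^ (p + 1) else 0 := by
  have hk2 : k.val < (n + 1) / 2 := k.isLt
  unfold ext2 m0Omega
  split
  · next h =>
    rw [if_neg (by omega)]
    simp only [Fin.val_mk]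
    have e1 : 2 * (k.val + 1) - 1 = 2 * k.val + 1 := by omega
    have e2 : 2 * (k.val + 1) - 2 = 2 * k.val := by omega
    rw [e1, e2]
  · next h =>
    rw [if_neg]
    rintro ⟨h1, h2, h3⟩
    omega

lemma omega_closed (hn : 3 ≤ n) : ∀ k, m0Closed K n (m0Omega K n k) := by
  intro k
  rw [closed_iff K n _ hn]
  intro j l hj hjn hl hln
  rcases Nat.eq_zero_or_pos k.val with hk | hk
  · rw [ext2_omega_zero K n hn k hk, ext2_omega_zero K n hn k hk,
      if_neg (by omega), if_neg (by omega), if_neg (by omega), if_neg (by omega)]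
  · have hk2 : k.val < (n + 1) / 2 := k.isLt
    rw [ext2_omega_pos K n hn k hk, ext2_omega_pos K n hn k hk]
    by_cases hc : j + 1 + l = 2 * k.val + 1
    · rw [if_pos ⟨hc, by omega, by omega⟩, if_pos ⟨by omega, by omega, by omega⟩]
      exact m0_neg_one_pow_congr K (j + 1 + 1) (l + 1 + 1) (by omega)
    · rw [if_neg (by omega), if_neg (by omega)]

end Aux3

section Main
variable (K : Type*) [Field K] [CharZero K] (n : ℕ)

lemma omega_apply (k : Fin ((n + 1) / 2)) (i j : Fin n) :
    m0Omega K n k i j =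
      if k.val = 0 then
        (if i.val = 0 ∧ j.val = n - 1 then 1
         else if j.val = 0 ∧ i.val = n - 1 then -1 else 0)
      else (if i.val + j.val = 2 * k.val + 1 ∧ 1 ≤ i.val ∧ i.val ≤ 2 * k.val
        then (-1 : K) ^ (i.val + 1) else 0) := by
  unfold m0Omega
  by_cases hk : k.val = 0
  · rw [if_pos hk, if_pos hk]
  · rw [if_neg hk, if_neg hk]
    have e1 : 2 * (k.val + 1) - 1 = 2 * k.val + 1 := by omega
    have e2 : 2 * (k.val + 1) - 2 = 2 * k.val := by omega
    rw [e1, e2]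

lemma half_zero (x : K) (h : x = -x) : x = 0 := by
  have h2 : (2 : K) * x = 0 := by linear_combination h
  rcases mul_eq_zero.mp h2 with h3 | h3
  · exact absurd h3 two_ne_zero
  · exact h3

lemma part2 (hn : 3 ≤ n) (a : Fin n → Fin n → K) (hanti : ∀ i j, a i j = - a j i)
    (hcl : m0Closed K n a) :
    ∃ (coef : Fin ((n + 1) / 2) → K) (f : Fin n → K),
      ∀ i j, a i j = (∑ k, coef k * m0Omega K n k i j) + ∑ m, m0c K n i j m * f m := by
  have hA := (closed_iff K n a hn).mp hcl
  have hAanti : ∀ p q, ext2 K n a p q = - ext2 K n a q p := by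
    intro p q; unfold ext2
    by_cases h : p < n ∧ q < n
    · rw [dif_pos h, dif_pos ⟨h.2, h.1⟩]; exact hanti _ _
    · rw [dif_neg h, dif_neg (fun hh => h ⟨hh.2, hh.1⟩), neg_zero]
  have hAzero : ∀ p q : ℕ, n ≤ p ∨ n ≤ q → ext2 K n a p q = 0 := ext2_zero K n a
  have hrec : ∀ p q : ℕ, 1 ≤ q →
      ext2 K n a (p + 1) q = (-1 : K) ^ p * ext2 K n a 1 (p + q) := by
    intro p
    induction p with
    | zero => intro q hq; simp
    | succ m ih =>
      intro q hq
      by_cases hb : m + 1 < n ∧ q < n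
      · have h1 := hA (m + 1) q (by omega) hb.1 hq hb.2
        rw [h1, hAanti (q + 1) (m + 1), ih (q + 1) (by omega),
          show m + (q + 1) = m + 1 + q from by omega, pow_succ]
        ring
      · have hz1 : ext2 K n a (m + 1 + 1) q = 0 := hAzero _ _ (by omega)
        have hz2 : ext2 K n a 1 (m + 1 + q) = 0 := hAzero _ _ (by omega)
        rw [hz1, hz2, mul_zero]
  have hodd : ∀ t : ℕ, t % 2 = 1 → ext2 K n a 1 t = 0 := by
    intro t ht
    obtain ⟨u, hu⟩ : ∃ u, t = 2 * u + 1 := ⟨t / 2, by omega⟩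
    have h2 := hrec (2 * u) 1 le_rfl
    rw [show (-1 : K) ^ (2 * u) = 1 from by rw [pow_mul, neg_one_sq, one_pow], one_mul] at h2
    apply half_zero
    calc ext2 K n a 1 t = - ext2 K n a t 1 := hAanti 1 t
    _ = - ext2 K n a 1 t := by rw [hu, h2, show 2 * u + 1 = 2 * u + 1 from rfl]
  refine ⟨fun k => if k.val = 0 then ext2 K n a 0 (n - 1) else ext2 K n a 1 (2 * k.val),
          fun m => if 2 ≤ m.val then ext2 K n a 0 (m.val - 1) else 0, ?_⟩
  intro i j
  rw [sum_m0c, ← ext2_apply K n a i j]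
  have hf : ∀ t : ℕ, ext1 K n (fun m : Fin n =>
      if 2 ≤ m.val then ext2 K n a 0 (m.val - 1) else 0) t
      = if 2 ≤ t ∧ t < n then ext2 K n a 0 (t - 1) else 0 := by
    intro t; unfold ext1
    split
    · next h => simp only [Fin.val_mk]; split_ifs <;> first | rfl | omega
    · next h => rw [if_neg (by omega)]
  have h0 : 0 < (n + 1) / 2 := by omega
  rcases Nat.eq_zero_or_pos i.val with hi | hi <;> rcases Nat.eq_zero_or_pos j.val with hj | hj
  · -- i = j = 0
    have hij : i = j := Fin.ext (by omega)
    have hz : ext2 K n a i.val j.val = 0 := by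
      apply half_zero; rw [ext2_apply, hij]; exact hanti j j
    rw [hz, if_neg (show ¬(i.val = 0 ∧ 1 ≤ j.val) by omega),
      if_neg (show ¬(j.val = 0 ∧ 1 ≤ i.val) by omega), Finset.sum_eq_zero]
    · ring
    · intro k _
      have hω : m0Omega K n k i j = 0 := by
        rw [omega_apply]
        rcases Nat.eq_zero_or_pos k.val with hk | hk
        · rw [if_pos hk, if_neg (show ¬(i.val = 0 ∧ j.val = n - 1) by omega),
            if_neg (show ¬(j.val = 0 ∧ i.val = n - 1) by omega)]
        · rw [if_neg (show ¬(k.val = 0) by omega),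
            if_neg (show ¬(i.val + j.val = 2 * k.val + 1 ∧ 1 ≤ i.val ∧ i.val ≤ 2 * k.val) by omega)]
      rw [hω, mul_zero]
  · -- i = 0, j ≥ 1
    rw [if_neg (show ¬(j.val = 0 ∧ 1 ≤ i.val) by omega),
      if_pos (show i.val = 0 ∧ 1 ≤ j.val from ⟨hi, hj⟩), hf,
      Finset.sum_eq_single (⟨0, h0⟩ : Fin ((n + 1) / 2))]
    · beta_reduce
      have hc : (if (⟨0, h0⟩ : Fin ((n + 1) / 2)).val = 0 then ext2 K n a 0 (n - 1)
          else ext2 K n a 1 (2 * (⟨0, h0⟩ : Fin ((n + 1) / 2)).val)) = ext2 K n a 0 (n - 1) := by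
        rw [if_pos rfl]
      rw [hc]
      by_cases hj1 : j.val = n - 1
      · have hω : m0Omega K n ⟨0, h0⟩ i j = 1 := by
          rw [omega_apply, if_pos rfl, if_pos (show i.val = 0 ∧ j.val = n - 1 from ⟨hi, hj1⟩)]
        rw [hω, if_neg (show ¬(2 ≤ j.val + 1 ∧ j.val + 1 < n) by omega), hi, hj1]
        ring
      · have hω : m0Omega K n ⟨0, h0⟩ i j = 0 := by
          rw [omega_apply, if_pos rfl, if_neg (show ¬(i.val = 0 ∧ j.val = n - 1) by omega),
            if_neg (show ¬(j.val = 0 ∧ i.val = n - 1) by omega)]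
        rw [hω, if_pos (show 2 ≤ j.val + 1 ∧ j.val + 1 < n from ⟨by omega, by omega⟩),
          show j.val + 1 - 1 = j.val from rfl, hi]
        ring
    · intro b _ hb
      have hbv : 1 ≤ b.val := by
        rcases Nat.eq_zero_or_pos b.val with h | h
        · exact absurd (Fin.ext (show b.val = (⟨0, h0⟩ : Fin ((n + 1) / 2)).val from h)) hb
        · exact h
      have hω : m0Omega K n b i j = 0 := by
        rw [omega_apply, if_neg (show ¬(b.val = 0) by omega),
          if_neg (show ¬(i.val + j.val = 2 * b.val + 1 ∧ 1 ≤ i.val ∧ i.val ≤ 2 * b.val) by omega)]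
      rw [hω, mul_zero]
    · intro h; exact absurd (Finset.mem_univ _) h
  · -- i ≥ 1, j = 0
    rw [if_neg (show ¬(i.val = 0 ∧ 1 ≤ j.val) by omega),
      if_pos (show j.val = 0 ∧ 1 ≤ i.val from ⟨hj, hi⟩), hf,
      Finset.sum_eq_single (⟨0, h0⟩ : Fin ((n + 1) / 2))]
    · beta_reduce
      have hc : (if (⟨0, h0⟩ : Fin ((n + 1) / 2)).val = 0 then ext2 K n a 0 (n - 1)
          else ext2 K n a 1 (2 * (⟨0, h0⟩ : Fin ((n + 1) / 2)).val)) = ext2 K n a 0 (n - 1) := by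
        rw [if_pos rfl]
      rw [hc, hAanti i.val j.val, hj]
      by_cases hi1 : i.val = n - 1
      · have hω : m0Omega K n ⟨0, h0⟩ i j = -1 := by
          rw [omega_apply, if_pos rfl, if_neg (show ¬(i.val = 0 ∧ j.val = n - 1) by omega),
            if_pos (show j.val = 0 ∧ i.val = n - 1 from ⟨hj, hi1⟩)]
        rw [hω, if_neg (show ¬(2 ≤ i.val + 1 ∧ i.val + 1 < n) by omega), hi1]
        ring
      · have hω : m0Omega K n ⟨0, h0⟩ i j = 0 := by
          rw [omega_apply, if_pos rfl, if_neg (show ¬(i.val = 0 ∧ j.val = n - 1) by omega),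
            if_neg (show ¬(j.val = 0 ∧ i.val = n - 1) by omega)]
        rw [hω, if_pos (show 2 ≤ i.val + 1 ∧ i.val + 1 < n from ⟨by omega, by omega⟩),
          show i.val + 1 - 1 = i.val from rfl]
        ring
    · intro b _ hb
      have hbv : 1 ≤ b.val := by
        rcases Nat.eq_zero_or_pos b.val with h | h
        · exact absurd (Fin.ext (show b.val = (⟨0, h0⟩ : Fin ((n + 1) / 2)).val from h)) hb
        · exact h
      have hω : m0Omega K n b i j = 0 := by
        rw [omega_apply, if_neg (show ¬(b.val = 0) by omega),
          if_neg (show ¬(i.val + j.val = 2 * b.val + 1 ∧ 1 ≤ i.val ∧ i.val ≤ 2 * b.val) by omega)]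
      rw [hω, mul_zero]
    · intro h; exact absurd (Finset.mem_univ _) h
  · -- i ≥ 1, j ≥ 1
    rw [if_neg (show ¬(i.val = 0 ∧ 1 ≤ j.val) by omega),
      if_neg (show ¬(j.val = 0 ∧ 1 ≤ i.val) by omega)]
    obtain ⟨p, hp⟩ : ∃ p, i.val = p + 1 := ⟨i.val - 1, by omega⟩
    have hL : ext2 K n a i.val j.val = (-1 : K) ^ p * ext2 K n a 1 (p + j.val) := by
      rw [hp]; exact hrec p j.val hj
    by_cases hpar : (p + j.val) % 2 = 1
    · -- i + j even : everything vanishes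
      rw [hL, hodd _ hpar, mul_zero, Finset.sum_eq_zero]
      · ring
      · intro k _
        have hω : m0Omega K n k i j = 0 := by
          rw [omega_apply]
          rcases Nat.eq_zero_or_pos k.val with hk | hk
          · rw [if_pos hk, if_neg (show ¬(i.val = 0 ∧ j.val = n - 1) by omega),
              if_neg (show ¬(j.val = 0 ∧ i.val = n - 1) by omega)]
          · rw [if_neg (show ¬(k.val = 0) by omega),
              if_neg (show ¬(i.val + j.val = 2 * k.val + 1 ∧ 1 ≤ i.val ∧ i.val ≤ 2 * k.val) by
                omega)]
        rw [hω, mul_zero]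
    · -- i + j odd
      obtain ⟨t, ht⟩ : ∃ t, p + j.val = 2 * t := ⟨(p + j.val) / 2, by omega⟩
      have ht1 : 1 ≤ t := by omega
      by_cases htn : t < (n + 1) / 2
      · rw [hL, Finset.sum_eq_single (⟨t, htn⟩ : Fin ((n + 1) / 2))]
        · beta_reduce
          have hc : (if (⟨t, htn⟩ : Fin ((n + 1) / 2)).val = 0 then ext2 K n a 0 (n - 1)
              else ext2 K n a 1 (2 * (⟨t, htn⟩ : Fin ((n + 1) / 2)).val))
              = ext2 K n a 1 (2 * t) := by
            simp only [Fin.val_mk]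
            rw [if_neg (show ¬(t = 0) by omega)]
          have hω : m0Omega K n ⟨t, htn⟩ i j = (-1 : K) ^ (i.val + 1) := by
            rw [omega_apply]
            simp only [Fin.val_mk]
            rw [if_neg (show ¬(t = 0) by omega),
              if_pos (show i.val + j.val = 2 * t + 1 ∧ 1 ≤ i.val ∧ i.val ≤ 2 * t from
                ⟨by omega, by omega, by omega⟩)]
          rw [hc, hω, ht, m0_neg_one_pow_congr K p (i.val + 1) (by omega)]
          ring
        · intro b _ hb
          have hbv : b.val ≠ t := fun h => hb (Fin.ext h)
          have hω : m0Omega K n b i j = 0 := by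
            rw [omega_apply]
            rcases Nat.eq_zero_or_pos b.val with hk | hk
            · rw [if_pos hk, if_neg (show ¬(i.val = 0 ∧ j.val = n - 1) by omega),
                if_neg (show ¬(j.val = 0 ∧ i.val = n - 1) by omega)]
            · rw [if_neg (show ¬(b.val = 0) by omega),
                if_neg (show ¬(i.val + j.val = 2 * b.val + 1 ∧ 1 ≤ i.val ∧ i.val ≤ 2 * b.val) by
                  omega)]
          rw [hω, mul_zero]
        · intro h; exact absurd (Finset.mem_univ _) h
      · rw [hL, ht, hAzero 1 (2 * t) (by omega), mul_zero, Finset.sum_eq_zero]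
        · ring
        · intro k _
          have hk2 : k.val < (n + 1) / 2 := k.isLt
          have hω : m0Omega K n k i j = 0 := by
            rw [omega_apply]
            rcases Nat.eq_zero_or_pos k.val with hk | hk
            · rw [if_pos hk, if_neg (show ¬(i.val = 0 ∧ j.val = n - 1) by omega),
                if_neg (show ¬(j.val = 0 ∧ i.val = n - 1) by omega)]
            · rw [if_neg (show ¬(k.val = 0) by omega),
                if_neg (show ¬(i.val + j.val = 2 * k.val + 1 ∧ 1 ≤ i.val ∧ i.val ≤ 2 * k.val) by
                  omega)]
          rw [hω, mul_zero]

lemma part3 (hn : 3 ≤ n) (coef : Fin ((n + 1) / 2) → K) (f : Fin n → K)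
    (h : ∀ i j, (∑ k, coef k * m0Omega K n k i j) = ∑ m, m0c K n i j m * f m) :
    coef = 0 := by
  funext k
  show coef k = 0
  have hk2 : k.val < (n + 1) / 2 := k.isLt
  rcases Nat.eq_zero_or_pos k.val with hk | hk
  · have hi : (0 : ℕ) < n := by omega
    have hj : n - 1 < n := by omega
    have h0 := h ⟨0, hi⟩ ⟨n - 1, hj⟩
    rw [sum_m0c, Finset.sum_eq_single k] at h0
    · beta_reduce at h0
      have hω : m0Omega K n k (⟨0, hi⟩ : Fin n) (⟨n - 1, hj⟩ : Fin n) = 1 := by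
        rw [omega_apply, if_pos hk]
        simp
      have he1 : ext1 K n f ((⟨n - 1, hj⟩ : Fin n).val + 1) = 0 := by
        simp only [Fin.val_mk]
        unfold ext1
        rw [dif_neg (by omega)]
      rw [hω, mul_one, he1, ite_self] at h0
      have he2 : (if (⟨n - 1, hj⟩ : Fin n).val = 0 ∧ 1 ≤ (⟨0, hi⟩ : Fin n).val then
          ext1 K n f ((⟨0, hi⟩ : Fin n).val + 1) else 0) = 0 := by
        rw [if_neg]
        rintro ⟨h1, h2⟩
        simp only [Fin.val_mk] at h1 h2
        omega
      rw [he2] at h0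
      rw [h0]; ring
    · intro b _ hb
      have hbv : 1 ≤ b.val := by
        rcases Nat.eq_zero_or_pos b.val with hh | hh
        · exact absurd (Fin.ext (by omega)) hb
        · exact hh
      have hω : m0Omega K n b (⟨0, hi⟩ : Fin n) (⟨n - 1, hj⟩ : Fin n) = 0 := by
        rw [omega_apply, if_neg (show ¬(b.val = 0) by omega)]
        simp only [Fin.val_mk]
        rw [if_neg (show ¬(0 + (n - 1) = 2 * b.val + 1 ∧ 1 ≤ 0 ∧ 0 ≤ 2 * b.val) by omega)]
      rw [hω, mul_zero]
    · intro hmem; exact absurd (Finset.mem_univ _) hmem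
  · have hi : (1 : ℕ) < n := by omega
    have hj : 2 * k.val < n := by omega
    have h0 := h ⟨1, hi⟩ ⟨2 * k.val, hj⟩
    rw [sum_m0c, Finset.sum_eq_single k] at h0
    · beta_reduce at h0
      have hω : m0Omega K n k (⟨1, hi⟩ : Fin n) (⟨2 * k.val, hj⟩ : Fin n) = 1 := by
        rw [omega_apply, if_neg (show ¬(k.val = 0) by omega)]
        have hc : (⟨1, hi⟩ : Fin n).val + (⟨2 * k.val, hj⟩ : Fin n).val = 2 * k.val + 1 ∧
            1 ≤ (⟨1, hi⟩ : Fin n).val ∧ (⟨1, hi⟩ : Fin n).val ≤ 2 * k.val := by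
          refine ⟨?_, ?_, ?_⟩ <;> simp only [Fin.val_mk] <;> omega
        rw [if_pos hc]
        simp only [Fin.val_mk]
        norm_num
      have he2a : (if (⟨1, hi⟩ : Fin n).val = 0 ∧ 1 ≤ (⟨2 * k.val, hj⟩ : Fin n).val then
          ext1 K n f ((⟨2 * k.val, hj⟩ : Fin n).val + 1) else 0) = 0 := by
        rw [if_neg]
        rintro ⟨h1, h2⟩
        simp only [Fin.val_mk] at h1
        omega
      have he2b : (if (⟨2 * k.val, hj⟩ : Fin n).val = 0 ∧ 1 ≤ (⟨1, hi⟩ : Fin n).val then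
          ext1 K n f ((⟨1, hi⟩ : Fin n).val + 1) else 0) = 0 := by
        rw [if_neg]
        rintro ⟨h1, h2⟩
        simp only [Fin.val_mk] at h1
        omega
      rw [hω, mul_one, he2a, he2b] at h0
      rw [h0]; ring
    · intro b _ hb
      have hbv : b.val ≠ k.val := fun hh => hb (Fin.ext hh)
      have hω : m0Omega K n b (⟨1, hi⟩ : Fin n) (⟨2 * k.val, hj⟩ : Fin n) = 0 := by
        rw [omega_apply]
        simp only [Fin.val_mk]
        rcases Nat.eq_zero_or_pos b.val with hbb | hbb
        · rw [if_pos hbb, if_neg (show ¬((1 : ℕ) = 0 ∧ 2 * k.val = n - 1) by omega),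
            if_neg (show ¬(2 * k.val = 0 ∧ (1 : ℕ) = n - 1) by omega)]
        · rw [if_neg (show ¬(b.val = 0) by omega),
            if_neg (show ¬(1 + 2 * k.val = 2 * b.val + 1 ∧ 1 ≤ 1 ∧ 1 ≤ 2 * b.val) by omega)]
      rw [hω, mul_zero]
    · intro hmem; exact absurd (Finset.mem_univ _) hmem

end Main

/-- For `n ≥ 3`, `H²(𝔪₀(n); K)` has dimension `⌊(n+1)/2⌋`, with a
basis given by the classes of the cocycles `e¹ ∧ eⁿ` and
`(1/2) ∑_{i=2}^{2k-1} (-1)ⁱ eⁱ ∧ e^{2k+1-i}`, `k = 2, …, ⌊(n+1)/2⌋`: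
(i) each of these forms is a cocycle; (ii) every antisymmetric closed 2-form is a
linear combination of them plus a coboundary `δf(eᵢ,eⱼ) = f([eᵢ,eⱼ])`; (iii) they
are linearly independent modulo coboundaries. -/
theorem stmt9 (K : Type*) [Field K] [CharZero K] (n : ℕ) (hn : 3 ≤ n) :
    (∀ k, m0Closed K n (m0Omega K n k)) ∧
    (∀ a : Fin n → Fin n → K, (∀ i j, a i j = - a j i) → m0Closed K n a →
      ∃ (coef : Fin ((n + 1) / 2) → K) (f : Fin n → K),
        ∀ i j, a i j = (∑ k, coef k * m0Omega K n k i j) + ∑ m, m0c K n i j m * f m) ∧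
    (∀ (coef : Fin ((n + 1) / 2) → K) (f : Fin n → K),
      (∀ i j, (∑ k, coef k * m0Omega K n k i j) = ∑ m, m0c K n i j m * f m) →
      coef = 0) :=
  ⟨omega_closed K n hn, part2 K n hn, fun coef f h => part3 K n hn coef f h⟩
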